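/- Let P be a nonempty finite set of points in the Euclidean plane ℝ², let s ∈ ℝ² \ P, and let T' be a spanning tree of P ∪ {s} in which s has at most two neighbours. Then there exists a spanning tree T of P whose total length is at most the total length of T'. (In particular, a Steiner point of degree at most two never decreases the length of a minimum spanning tree.) -/

import Mathlib

open scoped BigOperators

noncomputable section

/-- The Euclidean plane. -/
abbrev Pt : Type := EuclideanSpace ℝ (Fin 2)

/-- The length of an edge (an unordered pair of points): the Euclidean
distance between its endpoints. -/
def edgeLen : Sym2 Pt → ℝ :=
  Sym2.lift ⟨fun a b => dist a b, fun a b => dist_comm a b⟩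

/-- The total length of a graph on the plane: the sum of the Euclidean
lengths of its edges. -/
def glength (G : SimpleGraph Pt) : ℝ := ∑ᶠ e ∈ G.edgeSet, edgeLen e

/-- `G` is a spanning tree of the point set `V`: all its edges join points of
`V`, it is acyclic, and all points of `V` are pairwise connected in `G`. -/
def IsSpanningTreeOn (V : Set Pt) (G : SimpleGraph Pt) : Prop :=
  (∀ ⦃x y : Pt⦄, G.Adj x y → x ∈ V ∧ y ∈ V) ∧ G.IsAcyclic ∧
    ∀ x ∈ V, ∀ y ∈ V, G.Reachable x y

/-- `G` is a minimum spanning tree of the point set `V`. -/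
def IsMSTOn (V : Set Pt) (G : SimpleGraph Pt) : Prop :=
  IsSpanningTreeOn V G ∧
    ∀ H : SimpleGraph Pt, IsSpanningTreeOn V H → glength G ≤ glength H

open SimpleGraph

lemma edgeLen_mk (x y : Pt) : edgeLen s(x, y) = dist x y := rfl

lemma edgeLen_nonneg (e : Sym2 Pt) : 0 ≤ edgeLen e := by
  induction e using Sym2.ind with
  | _ x y => rw [edgeLen_mk]; exact dist_nonneg

lemma glength_eq_sum {G : SimpleGraph Pt} (h : G.edgeSet.Finite) :
    glength G = ∑ e ∈ h.toFinset, edgeLen e :=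
  finsum_mem_eq_finite_toFinset_sum _ h

lemma glength_mono {G H : SimpleGraph Pt} (hfin : H.edgeSet.Finite)
    (hsub : G.edgeSet ⊆ H.edgeSet) : glength G ≤ glength H := by
  have hGfin := hfin.subset hsub
  rw [glength_eq_sum hGfin, glength_eq_sum hfin]
  apply Finset.sum_le_sum_of_subset_of_nonneg
  · intro e he
    simp only [Set.Finite.mem_toFinset] at he ⊢
    exact hsub he
  · intro e _ _; exact edgeLen_nonneg e

lemma reachable_of_reachable_del {G : SimpleGraph Pt} {v₀ w₀ : Pt}
    (h : (G \ fromEdgeSet {s(v₀, w₀)}).Reachable v₀ w₀) :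
    ∀ {x y : Pt}, G.Reachable x y → (G \ fromEdgeSet {s(v₀, w₀)}).Reachable x y := by
  intro x y hxy
  obtain ⟨p⟩ := hxy
  induction p with
  | nil => exact Reachable.refl _
  | @cons x z y ha p ih =>
    refine Reachable.trans ?_ ih
    by_cases he : s(x, z) = s(v₀, w₀)
    · rw [Sym2.eq_iff] at he
      rcases he with ⟨rfl, rfl⟩ | ⟨rfl, rfl⟩
      · exact h
      · exact h.symm
    · refine Adj.reachable ?_
      simp only [sdiff_adj, fromEdgeSet_adj, Set.mem_singleton_iff]
      exact ⟨ha, by tauto⟩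

lemma exists_spanning_tree (V : Set Pt) :
    ∀ (n : ℕ) (G : SimpleGraph Pt), G.edgeSet.Finite → G.edgeSet.ncard ≤ n →
    (∀ ⦃x y : Pt⦄, G.Adj x y → x ∈ V ∧ y ∈ V) →
    (∀ x ∈ V, ∀ y ∈ V, G.Reachable x y) →
    ∃ T : SimpleGraph Pt, T.edgeSet ⊆ G.edgeSet ∧ IsSpanningTreeOn V T := by
  intro n
  induction n with
  | zero =>
    intro G hfin hcard hV hconn
    have hE : G.edgeSet = ∅ := by
      rw [← Set.ncard_eq_zero hfin]
      omega
    have hbot : G = ⊥ := by rwa [← edgeSet_eq_empty]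
    exact ⟨G, subset_rfl, hV, by rw [hbot]; exact isAcyclic_bot, hconn⟩
  | succ n ih =>
    intro G hfin hcard hV hconn
    by_cases hac : G.IsAcyclic
    · exact ⟨G, subset_rfl, hV, hac, hconn⟩
    · rw [IsAcyclic] at hac
      push_neg at hac
      obtain ⟨v, c, hc⟩ := hac
      cases c with
      | nil => exact absurd hc Walk.IsCycle.not_of_nil
      | @cons _ z _ hadj p =>
        have hmem : s(v, z) ∈ (Walk.cons hadj p).edges := by simp
        have key := (adj_and_reachable_delete_edges_iff_exists_cycle).mpr
          ⟨v, _, hc, hmem⟩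
        set G' : SimpleGraph Pt := G \ fromEdgeSet {s(v, z)} with hG'
        have hsub : G'.edgeSet ⊆ G.edgeSet \ {s(v, z)} := by
          intro e he
          induction e using Sym2.ind with
          | _ x y =>
            rw [mem_edgeSet, hG', sdiff_adj, fromEdgeSet_adj] at he
            refine ⟨he.1, ?_⟩
            simp only [Set.mem_singleton_iff]
            intro hxy
            exact he.2 ⟨hxy, he.1.ne⟩
        have hvz : s(v, z) ∈ G.edgeSet := key.1
        have hfin' : G'.edgeSet.Finite := hfin.subset (hsub.trans Set.diff_subset)
        have hcard' : G'.edgeSet.ncard ≤ n := by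
          have h1 : G'.edgeSet.ncard ≤ (G.edgeSet \ {s(v, z)}).ncard :=
            Set.ncard_le_ncard hsub (hfin.subset Set.diff_subset)
          have h2 : (G.edgeSet \ {s(v, z)}).ncard < G.edgeSet.ncard :=
            Set.ncard_diff_singleton_lt_of_mem hvz hfin
          omega
        have hV' : ∀ ⦃x y : Pt⦄, G'.Adj x y → x ∈ V ∧ y ∈ V := fun x y hxy =>
          hV (hxy.1)
        have hconn' : ∀ x ∈ V, ∀ y ∈ V, G'.Reachable x y := fun x hx y hy =>
          reachable_of_reachable_del key.2 (hconn x hx y hy)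
        obtain ⟨T, hT1, hT2⟩ := ih G' hfin' hcard' hV' hconn'
        exact ⟨T, hT1.trans (hsub.trans Set.diff_subset), hT2⟩

theorem stmt5 (P : Finset Pt) (hP : P.Nonempty) (s : Pt) (hs : s ∉ P)
    (T' : SimpleGraph Pt) (hT' : IsSpanningTreeOn (insert s ↑P) T')
    (hdeg : (T'.neighborSet s).ncard ≤ 2) :
    ∃ T : SimpleGraph Pt, IsSpanningTreeOn ↑P T ∧ glength T ≤ glength T' := by
  classical
  obtain ⟨hVedges, hacy, hconn⟩ := hT'
  have hVfin : (insert s ↑P : Set Pt).Finite := Set.Finite.insert _ P.finite_toSet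
  have hEfin : T'.edgeSet.Finite := by
    apply Set.Finite.subset ((hVfin.prod hVfin).image fun q => s(q.1, q.2))
    intro e he
    induction e using Sym2.ind with
    | _ x y =>
      rw [mem_edgeSet] at he
      exact ⟨(x, y), ⟨(hVedges he).1, (hVedges he).2⟩, rfl⟩
  -- find a neighbour of s
  obtain ⟨p₀, hp₀⟩ := hP
  have hsp : s ≠ p₀ := fun h => hs (h ▸ hp₀)
  obtain ⟨w⟩ := hconn s (Set.mem_insert _ _) p₀ (Set.mem_insert_of_mem _ hp₀)
  obtain ⟨a, ha⟩ : ∃ a, T'.Adj s a := by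
    cases w with
    | nil => exact absurd rfl hsp
    | cons h _ => exact ⟨_, h⟩
  have hNfin : (T'.neighborSet s).Finite := by
    apply hVfin.subset
    intro c hc
    exact (hVedges hc).2
  -- choose the second neighbour b (b = a if s has only one neighbour)
  obtain ⟨b, hb, hN⟩ : ∃ b, T'.Adj s b ∧ ∀ c, T'.Adj s c → c = a ∨ c = b := by
    by_cases hb' : ∃ b, T'.Adj s b ∧ b ≠ a
    · obtain ⟨b, hb, hba⟩ := hb'
      refine ⟨b, hb, fun c hc => ?_⟩
      by_contra hcon
      push_neg at hcon
      have hsubN : ({a, b, c} : Set Pt) ⊆ T'.neighborSet s := by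
        intro x hx
        rcases hx with rfl | rfl | rfl
        · exact ha
        · exact hb
        · exact hc
      have h3 : ({a, b, c} : Set Pt).ncard = 3 := by
        rw [Set.ncard_eq_three]
        exact ⟨a, b, c, fun h => hba h.symm, Ne.symm hcon.1, Ne.symm hcon.2, rfl⟩
      have := Set.ncard_le_ncard hsubN hNfin
      omega
    · push_neg at hb'
      exact ⟨a, ha, fun c hc => Or.inl (hb' c hc)⟩
  have has : a ≠ s := ha.ne'
  have hbs : b ≠ s := hb.ne'
  have haP : a ∈ (↑P : Set Pt) := by
    have := (hVedges ha).2
    rcases this with h | h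
    · exact absurd h has
    · exact h
  have hbP : b ∈ (↑P : Set Pt) := by
    have := (hVedges hb).2
    rcases this with h | h
    · exact absurd h hbs
    · exact h
  -- the edge ab is not in T'
  have hab_not : s(a, b) ∉ T'.edgeSet := by
    intro habE
    rw [mem_edgeSet] at habE
    have hane : a ≠ b := habE.ne
    have hcyc : (Walk.cons ha (Walk.cons habE (Walk.cons hb.symm Walk.nil)) :
        T'.Walk s s).IsCycle := by
      rw [Walk.isCycle_def]
      refine ⟨?_, by simp, ?_⟩
      · rw [Walk.isTrail_def]
        simp only [Walk.edges_cons, Walk.edges_nil, List.nodup_cons, List.mem_cons,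
          List.not_mem_nil, or_false, List.mem_singleton, List.nodup_nil, and_true,
          Sym2.eq_iff]
        aesop
      · simp only [Walk.support_cons, Walk.support_nil, List.tail_cons]
        simp [hane, has, hbs]
    exact hacy _ hcyc
  -- the candidate connected graph G
  set G : SimpleGraph Pt := (T' \ fromEdgeSet {e | s ∈ e}) ⊔ fromEdgeSet {s(a, b)}
    with hGdef
  have hGadj : ∀ x y : Pt,
      G.Adj x y ↔ (T'.Adj x y ∧ x ≠ s ∧ y ≠ s) ∨ (s(x, y) = s(a, b) ∧ x ≠ y) := by
    intro x y
    rw [hGdef, sup_adj, sdiff_adj, fromEdgeSet_adj, fromEdgeSet_adj]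
    simp only [Set.mem_setOf_eq, Sym2.mem_iff, Set.mem_singleton_iff]
    constructor
    · rintro (⟨h1, h2⟩ | ⟨h1, h2⟩)
      · left
        refine ⟨h1, ?_, ?_⟩
        · rintro rfl; exact h2 ⟨Or.inl rfl, h1.ne⟩
        · rintro rfl; exact h2 ⟨Or.inr rfl, h1.ne⟩
      · right; exact ⟨h1, h2⟩
    · rintro (⟨h1, h2, h3⟩ | ⟨h1, h2⟩)
      · left
        refine ⟨h1, ?_⟩
        rintro ⟨rfl | rfl, -⟩
        · exact h2 rfl
        · exact h3 rfl
      · right; exact ⟨h1, h2⟩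
  -- edges of G lie in P
  have hGV : ∀ ⦃x y : Pt⦄, G.Adj x y → x ∈ (↑P : Set Pt) ∧ y ∈ (↑P : Set Pt) := by
    intro x y hxy
    rw [hGadj] at hxy
    rcases hxy with ⟨h1, h2, h3⟩ | ⟨h1, -⟩
    · constructor
      · rcases (hVedges h1).1 with h | h
        · exact absurd h h2
        · exact h
      · rcases (hVedges h1).2 with h | h
        · exact absurd h h3
        · exact h
    · rw [Sym2.eq_iff] at h1
      rcases h1 with ⟨rfl, rfl⟩ | ⟨rfl, rfl⟩
      · exact ⟨haP, hbP⟩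
      · exact ⟨hbP, haP⟩
  -- connectivity of G on P
  have hGconn : ∀ x ∈ (↑P : Set Pt), ∀ y ∈ (↑P : Set Pt), G.Reachable x y := by
    intro x hx y hy
    obtain ⟨w⟩ := hconn x (Set.mem_insert_of_mem _ hx) y (Set.mem_insert_of_mem _ hy)
    suffices H : ∀ n (x : Pt), x ∈ (↑P : Set Pt) → ∀ (w : T'.Walk x y),
        w.length ≤ n → G.Reachable x y by
      exact H w.length x hx w le_rfl
    intro n
    induction n with
    | zero =>
      intro x hx w hw
      have : x = y := Walk.eq_of_length_eq_zero (Nat.le_zero.mp hw)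
      subst this
      exact Reachable.refl _
    | succ n ih =>
      intro x hx w hw
      cases w with
      | nil => exact Reachable.refl _
      | @cons _ z _ h p =>
        by_cases hzs : z = s
        · subst hzs
          cases p with
          | nil => exact absurd hy hs
          | @cons _ z' _ h2 q =>
            have hz's : z' ≠ z := h2.ne'
            have hz'P : z' ∈ (↑P : Set Pt) := by
              rcases (hVedges h2).2 with hh | hh
              · exact absurd hh hz's
              · exact hh
            have hx' : x = a ∨ x = b := hN _ h.symm
            have hz' : z' = a ∨ z' = b := hN _ h2
            have step : G.Reachable x z' := by
              by_cases hxz : x = z'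
              · subst hxz; exact Reachable.refl _
              · refine Adj.reachable ?_
                rw [hGadj]
                right
                refine ⟨?_, hxz⟩
                rcases hx' with rfl | rfl <;> rcases hz' with rfl | rfl
                · exact absurd rfl hxz
                · rfl
                · rw [Sym2.eq_swap]
                · exact absurd rfl hxz
            refine step.trans (ih z' hz'P q ?_)
            simp only [Walk.length_cons] at hw
            omega
        · have hzP : z ∈ (↑P : Set Pt) := by
            rcases (hVedges h).2 with hh | hh
            · exact absurd hh hzs
            · exact hh
          have hxs : x ≠ s := fun hh => hs (hh ▸ hx)
          have step : G.Adj x z := by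
            rw [hGadj]; left; exact ⟨h, hxs, hzs⟩
          refine step.reachable.trans (ih z hzP p ?_)
          simp only [Walk.length_cons] at hw
          omega
  -- the length bound for G
  have hGsub : G.edgeSet ⊆ insert s(a, b) (T'.edgeSet \ {s(s, a), s(s, b)}) := by
    intro e he
    induction e using Sym2.ind with
    | _ x y =>
      rw [mem_edgeSet, hGadj] at he
      rcases he with ⟨h1, h2, h3⟩ | ⟨h1, -⟩
      · right
        refine ⟨h1, ?_⟩
        simp only [Set.mem_insert_iff, Set.mem_singleton_iff, Sym2.eq_iff]
        aesop
      · rw [h1]; exact Set.mem_insert _ _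
  have hGfin : G.edgeSet.Finite :=
    Set.Finite.subset (Set.Finite.insert _ hEfin.diff) hGsub
  have hGlen : glength G ≤ glength T' := by
    have hfin2 : (insert s(a, b) (T'.edgeSet \ {s(s, a), s(s, b)})).Finite :=
      Set.Finite.insert _ hEfin.diff
    have step1 : glength G ≤ ∑ e ∈ hfin2.toFinset, edgeLen e := by
      rw [glength_eq_sum hGfin]
      apply Finset.sum_le_sum_of_subset_of_nonneg
      · intro e he
        simp only [Set.Finite.mem_toFinset] at he ⊢
        exact hGsub he
      · intro e _ _; exact edgeLen_nonneg e
    rw [glength_eq_sum hEfin]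
    refine le_trans step1 ?_
    -- identify finsets
    have hDsub : ({s(s, a), s(s, b)} : Finset (Sym2 Pt)) ⊆ hEfin.toFinset := by
      intro e he
      simp only [Finset.mem_insert, Finset.mem_singleton] at he
      rcases he with rfl | rfl
      · simp only [Set.Finite.mem_toFinset, mem_edgeSet]; exact ha
      · simp only [Set.Finite.mem_toFinset, mem_edgeSet]; exact hb
    have htoF : hfin2.toFinset =
        insert s(a, b) (hEfin.toFinset \ {s(s, a), s(s, b)}) := by
      ext e
      simp [Set.Finite.mem_toFinset]
    rw [htoF]
    have hab_notmem : s(a, b) ∉ hEfin.toFinset \ ({s(s, a), s(s, b)} : Finset (Sym2 Pt)) := by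
      intro h
      rw [Finset.mem_sdiff, Set.Finite.mem_toFinset] at h
      exact hab_not h.1
    rw [Finset.sum_insert hab_notmem]
    have hsplit : ∑ e ∈ hEfin.toFinset \ ({s(s, a), s(s, b)} : Finset (Sym2 Pt)), edgeLen e
        + ∑ e ∈ ({s(s, a), s(s, b)} : Finset (Sym2 Pt)), edgeLen e
        = ∑ e ∈ hEfin.toFinset, edgeLen e := Finset.sum_sdiff hDsub
    rw [← hsplit]
    have hkey : edgeLen s(a, b) ≤ ∑ e ∈ ({s(s, a), s(s, b)} : Finset (Sym2 Pt)), edgeLen e := by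
      by_cases hab : a = b
      · subst hab
        rw [edgeLen_mk, _root_.dist_self]
        apply Finset.sum_nonneg
        intro e _; exact edgeLen_nonneg e
      · have hne : s(s, a) ≠ s(s, b) := by
          intro h
          rw [Sym2.eq_iff] at h
          rcases h with ⟨-, h⟩ | ⟨h, -⟩
          · exact hab h
          · exact hbs h.symm
        rw [Finset.sum_pair hne]
        simp only [edgeLen_mk]
        calc dist a b ≤ dist a s + dist s b := dist_triangle a s b
          _ = dist s a + dist s b := by rw [dist_comm a s]
    linarith
  -- extract a spanning tree from G
  obtain ⟨T, hTsub, hTtree⟩ := exists_spanning_tree (↑P) G.edgeSet.ncard G hGfin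
    le_rfl hGV hGconn
  exact ⟨T, hTtree, le_trans (glength_mono hGfin hTsub) hGlen⟩

end
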